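/- With r, the partitions {I_1,…,I_r}, {J_1,…,J_r} and the limits λ_k = b(J_k)/a(I_k) as in the divergence theorem for the IPFP sequence (X_n)_{n≥0}, define a' by a'_i = λ_k·a_i whenever i ∈ I_k, and b' by b'_j = λ_k^{-1}·b_j whenever j ∈ J_k. Then the sequence (X_{2n})_{n≥0} converges to the unique matrix achieving the minimum of D(Y‖X_0) over all Y ∈ Γ(a',b,X_0), and the sequence (X_{2n+1})_{n≥0} converges to the unique matrix achieving the minimum of D(Y‖X_0) over all Y ∈ Γ(a,b',X_0). -/

import Mathlib

open Filter Topology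

namespace IPFP

variable {p q : ℕ}

/-- Row sums `X(i,+)`. -/
noncomputable def rowSum (X : Matrix (Fin p) (Fin q) ℝ) (i : Fin p) : ℝ := ∑ j, X i j

/-- Column sums `X(+,j)`. -/
noncomputable def colSum (X : Matrix (Fin p) (Fin q) ℝ) (j : Fin q) : ℝ := ∑ i, X i j

/-- `R_i(X) = X(i,+)/a_i`. -/
noncomputable def Rrat (a : Fin p → ℝ) (X : Matrix (Fin p) (Fin q) ℝ) (i : Fin p) : ℝ :=
  rowSum X i / a i

/-- `C_j(X) = X(+,j)/b_j`. -/
noncomputable def Crat (b : Fin q → ℝ) (X : Matrix (Fin p) (Fin q) ℝ) (j : Fin q) : ℝ :=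
  colSum X j / b j

/-- `T_R(X)(i,j) = X(i,j)/R_i(X)`. -/
noncomputable def TR (a : Fin p → ℝ) (X : Matrix (Fin p) (Fin q) ℝ) :
    Matrix (Fin p) (Fin q) ℝ :=
  fun i j => X i j / Rrat a X i

/-- `T_C(X)(i,j) = X(i,j)/C_j(X)`. -/
noncomputable def TC (b : Fin q → ℝ) (X : Matrix (Fin p) (Fin q) ℝ) :
    Matrix (Fin p) (Fin q) ℝ :=
  fun i j => X i j / Crat b X j

/-- The IPFP sequence: `X_0 = X0`, `X_{2n+1} = T_R(X_{2n})`, `X_{2n+2} = T_C(X_{2n+1})`. -/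
noncomputable def ipfp (a : Fin p → ℝ) (b : Fin q → ℝ) (X0 : Matrix (Fin p) (Fin q) ℝ) :
    ℕ → Matrix (Fin p) (Fin q) ℝ
  | 0 => X0
  | n + 1 => if Even n then TR a (ipfp a b X0 n) else TC b (ipfp a b X0 n)

/-- Membership in `Γ₀`: nonnegative entries, positive row and column sums. -/
def memGamma0 (X : Matrix (Fin p) (Fin q) ℝ) : Prop :=
  (∀ i j, 0 ≤ X i j) ∧ (∀ i, 0 < rowSum X i) ∧ (∀ j, 0 < colSum X j)

/-- Membership in `Γ₁`: member of `Γ₀` with total sum `1`. -/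
def memGamma1 (X : Matrix (Fin p) (Fin q) ℝ) : Prop :=
  memGamma0 X ∧ ∑ i, ∑ j, X i j = 1

/-- Membership in `Γ(a,b)`: member of `Γ₀` with row marginals `a` and column marginals `b`. -/
def memGamma (a : Fin p → ℝ) (b : Fin q → ℝ) (X : Matrix (Fin p) (Fin q) ℝ) : Prop :=
  memGamma0 X ∧ (∀ i, rowSum X i = a i) ∧ (∀ j, colSum X j = b j)

/-- `Supp(X) ⊆ Supp(Y)`. -/
def suppSubset (X Y : Matrix (Fin p) (Fin q) ℝ) : Prop :=
  ∀ i j, 0 < X i j → 0 < Y i j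

/-- Membership in `Γ(a,b,X0)`: member of `Γ(a,b)` with support contained in `Supp(X0)`. -/
def memGammaSub (a : Fin p → ℝ) (b : Fin q → ℝ) (X0 X : Matrix (Fin p) (Fin q) ℝ) : Prop :=
  memGamma a b X ∧ suppSubset X X0

/-- Relative entropy (I-divergence) `D(Y‖X) = Σ_{(i,j) ∈ Supp X} Y(i,j)·ln(Y(i,j)/X(i,j))`
(finite expression; it agrees with the relative entropy whenever `Supp Y ⊆ Supp X`,
with the convention `0·ln 0 = 0`). -/
noncomputable def relEnt (Y X : Matrix (Fin p) (Fin q) ℝ) : ℝ :=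
  ∑ i, ∑ j, if 0 < X i j then Y i j * Real.log (Y i j / X i j) else 0

/-- A real sequence converges to `l` at an at least geometric rate:
it tends to `l` and `limsup_n |x_n − l|^{1/n} < 1`. -/
noncomputable def geomSeq (x : ℕ → ℝ) (l : ℝ) : Prop :=
  Tendsto x atTop (nhds l) ∧
    Filter.limsup (fun n : ℕ => |x n - l| ^ ((n : ℝ)⁻¹)) atTop < 1

/-- A matrix sequence converges to `L` at an at least geometric rate (using the
`ℓ¹` norm on entries): it tends to `L` and `limsup_n ‖X_n − L‖^{1/n} < 1`. -/
noncomputable def geomMat (X : ℕ → Matrix (Fin p) (Fin q) ℝ)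
    (L : Matrix (Fin p) (Fin q) ℝ) : Prop :=
  Tendsto X atTop (nhds L) ∧
    Filter.limsup (fun n : ℕ => (∑ i, ∑ j, |X n i j - L i j|) ^ ((n : ℝ)⁻¹)) atTop < 1

end IPFP

open IPFP

section Aux
variable {p q : ℕ} (a : Fin p → ℝ) (b : Fin q → ℝ)

lemma rowSum_TR {X : Matrix (Fin p) (Fin q) ℝ} (i : Fin p)
    (ha : a i ≠ 0) (hr : rowSum X i ≠ 0) : rowSum (TR a X) i = a i := by
  simp only [rowSum, TR, Rrat] at *
  rw [← Finset.sum_div]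
  field_simp

lemma colSum_TC {X : Matrix (Fin p) (Fin q) ℝ} (j : Fin q)
    (hb : b j ≠ 0) (hc : colSum X j ≠ 0) : colSum (TC b X) j = b j := by
  simp only [colSum, IPFP.TC, Crat] at *
  rw [← Finset.sum_div]
  field_simp

end Aux

section Inv
variable {p q : ℕ} {a : Fin p → ℝ} {b : Fin q → ℝ} {X0 : Matrix (Fin p) (Fin q) ℝ}
variable (ha : ∀ i, 0 < a i) (hb : ∀ j, 0 < b j)
variable (h0nn : ∀ i j, 0 ≤ X0 i j) (h0r : ∀ i, 0 < rowSum X0 i) (h0c : ∀ j, 0 < colSum X0 j)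

include ha hb h0nn h0r h0c

lemma ipfp_inv : ∀ n, (∀ i j, 0 ≤ ipfp a b X0 n i j) ∧
    (∀ i j, (0 < ipfp a b X0 n i j ↔ 0 < X0 i j)) := by
  intro n
  induction n with
  | zero => exact ⟨h0nn, fun i j => ⟨id, id⟩⟩
  | succ n ih =>
    obtain ⟨hnn, hsupp⟩ := ih
    have hrpos : ∀ i, 0 < rowSum (ipfp a b X0 n) i := by
      intro i
      obtain ⟨j, hj⟩ : ∃ j, 0 < X0 i j := by
        by_contra h
        push_neg at h
        have : rowSum X0 i ≤ 0 := Finset.sum_nonpos fun j _ => h j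
        linarith [h0r i]
      exact Finset.sum_pos' (fun j _ => hnn i j) ⟨j, Finset.mem_univ j, (hsupp i j).2 hj⟩
    have hcpos : ∀ j, 0 < colSum (ipfp a b X0 n) j := by
      intro j
      obtain ⟨i, hi⟩ : ∃ i, 0 < X0 i j := by
        by_contra h
        push_neg at h
        have : colSum X0 j ≤ 0 := Finset.sum_nonpos fun i _ => h i
        linarith [h0c j]
      exact Finset.sum_pos' (fun i _ => hnn i j) ⟨i, Finset.mem_univ i, (hsupp i j).2 hi⟩
    have hR : ∀ i, 0 < Rrat a (ipfp a b X0 n) i := fun i => div_pos (hrpos i) (ha i)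
    have hC : ∀ j, 0 < Crat b (ipfp a b X0 n) j := fun j => div_pos (hcpos j) (hb j)
    have step : ipfp a b X0 (n+1)
        = if Even n then TR a (ipfp a b X0 n) else IPFP.TC b (ipfp a b X0 n) := rfl
    by_cases hev : Even n
    · rw [step, if_pos hev]
      refine ⟨fun i j => div_nonneg (hnn i j) (hR i).le, fun i j => ?_⟩
      show 0 < ipfp a b X0 n i j / Rrat a (ipfp a b X0 n) i ↔ _
      rw [div_pos_iff_of_pos_right (hR i)]; exact hsupp i j
    · rw [step, if_neg hev]
      refine ⟨fun i j => div_nonneg (hnn i j) (hC j).le, fun i j => ?_⟩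
      show 0 < ipfp a b X0 n i j / Crat b (ipfp a b X0 n) j ↔ _
      rw [div_pos_iff_of_pos_right (hC j)]; exact hsupp i j

lemma ipfp_rowSum_pos (n : ℕ) : ∀ i, 0 < rowSum (ipfp a b X0 n) i := by
  intro i
  obtain ⟨hnn, hsupp⟩ := ipfp_inv ha hb h0nn h0r h0c n
  obtain ⟨j, hj⟩ : ∃ j, 0 < X0 i j := by
    by_contra h
    push_neg at h
    have : rowSum X0 i ≤ 0 := Finset.sum_nonpos fun j _ => h j
    linarith [h0r i]
  exact Finset.sum_pos' (fun j _ => hnn i j) ⟨j, Finset.mem_univ j, (hsupp i j).2 hj⟩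

lemma ipfp_colSum_pos (n : ℕ) : ∀ j, 0 < colSum (ipfp a b X0 n) j := by
  intro j
  obtain ⟨hnn, hsupp⟩ := ipfp_inv ha hb h0nn h0r h0c n
  obtain ⟨i, hi⟩ : ∃ i, 0 < X0 i j := by
    by_contra h
    push_neg at h
    have : colSum X0 j ≤ 0 := Finset.sum_nonpos fun i _ => h i
    linarith [h0c j]
  exact Finset.sum_pos' (fun i _ => hnn i j) ⟨i, Finset.mem_univ i, (hsupp i j).2 hi⟩


end Inv

section Inv2
variable {p q : ℕ} {a : Fin p → ℝ} {b : Fin q → ℝ} {X0 : Matrix (Fin p) (Fin q) ℝ}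
variable (ha : ∀ i, 0 < a i) (hb : ∀ j, 0 < b j)
variable (h0nn : ∀ i j, 0 ≤ X0 i j) (h0r : ∀ i, 0 < rowSum X0 i) (h0c : ∀ j, 0 < colSum X0 j)

lemma ipfp_odd (n : ℕ) : ipfp a b X0 (2*n+1) = TR a (ipfp a b X0 (2*n)) := by
  show (if Even (2*n) then _ else _) = _
  rw [if_pos (even_two_mul n)]

lemma ipfp_even_succ (n : ℕ) : ipfp a b X0 (2*n+2) = IPFP.TC b (ipfp a b X0 (2*n+1)) := by
  show (if Even (2*n+1) then _ else _) = _
  rw [if_neg (by simp [Nat.even_add_one, even_two_mul n])]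

include ha hb h0nn h0r h0c

lemma rowSum_ipfp_odd (n : ℕ) (i : Fin p) : rowSum (ipfp a b X0 (2*n+1)) i = a i := by
  rw [ipfp_odd]
  exact rowSum_TR a i (ha i).ne' (ipfp_rowSum_pos ha hb h0nn h0r h0c (2*n) i).ne'

lemma colSum_ipfp_even_succ (n : ℕ) (j : Fin q) : colSum (ipfp a b X0 (2*n+2)) j = b j := by
  rw [ipfp_even_succ]
  exact colSum_TC b j (hb j).ne' (ipfp_colSum_pos ha hb h0nn h0r h0c (2*n+1) j).ne'

lemma ipfp_total (h0tot : ∑ i, ∑ j, X0 i j = 1)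
    (hsa : ∑ i, a i = 1) (hsb : ∑ j, b j = 1) :
    ∀ n, ∑ i, ∑ j, ipfp a b X0 n i j = 1 := by
  intro n
  cases n with
  | zero => exact h0tot
  | succ n =>
    have step : ipfp a b X0 (n+1)
        = if Even n then TR a (ipfp a b X0 n) else IPFP.TC b (ipfp a b X0 n) := rfl
    by_cases hev : Even n
    · rw [step, if_pos hev]
      calc ∑ i, ∑ j, TR a (ipfp a b X0 n) i j = ∑ i, a i := by
            refine Finset.sum_congr rfl fun i _ => ?_
            exact rowSum_TR a i (ha i).ne' (ipfp_rowSum_pos ha hb h0nn h0r h0c n i).ne'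
        _ = 1 := hsa
    · rw [step, if_neg hev]; refine Finset.sum_comm.trans ?_
      calc ∑ j, ∑ i, IPFP.TC b (ipfp a b X0 n) i j = ∑ j, b j := by
            refine Finset.sum_congr rfl fun j _ => ?_
            exact colSum_TC b j (hb j).ne' (ipfp_colSum_pos ha hb h0nn h0r h0c n j).ne'
        _ = 1 := hsb

end Inv2

section Transfer
variable {p q : ℕ} (a : Fin p → ℝ) (b : Fin q → ℝ)

lemma relEnt_TR_cell {X Y : Matrix (Fin p) (Fin q) ℝ}
    (hYnn : ∀ i j, 0 ≤ Y i j) (hXnn : ∀ i j, 0 ≤ X i j) (hYX : suppSubset Y X)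
    (hR : ∀ i, 0 < Rrat a X i) (i : Fin p) (j : Fin q) :
    (if 0 < TR a X i j then Y i j * Real.log (Y i j / TR a X i j) else 0)
      = (if 0 < X i j then Y i j * Real.log (Y i j / X i j) else 0)
        + Y i j * Real.log (Rrat a X i) := by
  by_cases h : 0 < X i j
  · have hTR : 0 < TR a X i j := div_pos h (hR i)
    rw [if_pos hTR, if_pos h]
    by_cases hy : Y i j = 0
    · simp [hy]
    · have hY : 0 < Y i j := lt_of_le_of_ne (hYnn i j) (Ne.symm hy)
      show Y i j * Real.log (Y i j / (X i j / Rrat a X i)) = _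
      rw [div_div_eq_mul_div, Real.log_div (mul_pos hY (hR i)).ne' h.ne',
        Real.log_mul hY.ne' (hR i).ne', Real.log_div hY.ne' h.ne']
      ring
  · have hX0 : X i j = 0 := le_antisymm (not_lt.mp h) (hXnn i j)
    have hY0 : Y i j = 0 := by
      by_contra hy
      exact h (hYX i j (lt_of_le_of_ne (hYnn i j) (Ne.symm hy)))
    have hTR : ¬ 0 < TR a X i j := by
      show ¬ 0 < X i j / Rrat a X i
      rw [hX0]; simp
    rw [if_neg hTR, if_neg h, hY0]; ring

lemma relEnt_TR {X Y : Matrix (Fin p) (Fin q) ℝ}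
    (hYnn : ∀ i j, 0 ≤ Y i j) (hXnn : ∀ i j, 0 ≤ X i j) (hYX : suppSubset Y X)
    (hR : ∀ i, 0 < Rrat a X i) :
    relEnt Y (TR a X) = relEnt Y X + ∑ i, rowSum Y i * Real.log (Rrat a X i) := by
  unfold relEnt
  rw [← Finset.sum_add_distrib]
  refine Finset.sum_congr rfl fun i _ => ?_
  calc ∑ j, (if 0 < TR a X i j then Y i j * Real.log (Y i j / TR a X i j) else 0)
      = ∑ j, ((if 0 < X i j then Y i j * Real.log (Y i j / X i j) else 0)
          + Y i j * Real.log (Rrat a X i)) := by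
        exact Finset.sum_congr rfl fun j _ => relEnt_TR_cell a hYnn hXnn hYX hR i j
    _ = _ := by
        rw [Finset.sum_add_distrib, ← Finset.sum_mul]
        rfl

lemma relEnt_TC_cell {X Y : Matrix (Fin p) (Fin q) ℝ}
    (hYnn : ∀ i j, 0 ≤ Y i j) (hXnn : ∀ i j, 0 ≤ X i j) (hYX : suppSubset Y X)
    (hC : ∀ j, 0 < Crat b X j) (i : Fin p) (j : Fin q) :
    (if 0 < IPFP.TC b X i j then Y i j * Real.log (Y i j / IPFP.TC b X i j) else 0)
      = (if 0 < X i j then Y i j * Real.log (Y i j / X i j) else 0)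
        + Y i j * Real.log (Crat b X j) := by
  by_cases h : 0 < X i j
  · have hTC : 0 < IPFP.TC b X i j := div_pos h (hC j)
    rw [if_pos hTC, if_pos h]
    by_cases hy : Y i j = 0
    · simp [hy]
    · have hY : 0 < Y i j := lt_of_le_of_ne (hYnn i j) (Ne.symm hy)
      show Y i j * Real.log (Y i j / (X i j / Crat b X j)) = _
      rw [div_div_eq_mul_div, Real.log_div (mul_pos hY (hC j)).ne' h.ne',
        Real.log_mul hY.ne' (hC j).ne', Real.log_div hY.ne' h.ne']
      ring
  · have hX0 : X i j = 0 := le_antisymm (not_lt.mp h) (hXnn i j)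
    have hY0 : Y i j = 0 := by
      by_contra hy
      exact h (hYX i j (lt_of_le_of_ne (hYnn i j) (Ne.symm hy)))
    have hTC : ¬ 0 < IPFP.TC b X i j := by
      show ¬ 0 < X i j / Crat b X j
      rw [hX0]; simp
    rw [if_neg hTC, if_neg h, hY0]; ring

lemma relEnt_TC {X Y : Matrix (Fin p) (Fin q) ℝ}
    (hYnn : ∀ i j, 0 ≤ Y i j) (hXnn : ∀ i j, 0 ≤ X i j) (hYX : suppSubset Y X)
    (hC : ∀ j, 0 < Crat b X j) :
    relEnt Y (IPFP.TC b X) = relEnt Y X + ∑ j, colSum Y j * Real.log (Crat b X j) := by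
  unfold relEnt
  calc ∑ i, ∑ j, (if 0 < IPFP.TC b X i j then Y i j * Real.log (Y i j / IPFP.TC b X i j) else 0)
      = ∑ i, ∑ j, ((if 0 < X i j then Y i j * Real.log (Y i j / X i j) else 0)
          + Y i j * Real.log (Crat b X j)) :=
        Finset.sum_congr rfl fun i _ =>
          Finset.sum_congr rfl fun j _ => relEnt_TC_cell b hYnn hXnn hYX hC i j
    _ = (∑ i, ∑ j, (if 0 < X i j then Y i j * Real.log (Y i j / X i j) else 0))
        + ∑ i, ∑ j, Y i j * Real.log (Crat b X j) := by
        rw [← Finset.sum_add_distrib]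
        exact Finset.sum_congr rfl fun i _ => Finset.sum_add_distrib
    _ = _ := by
        congr 1
        rw [Finset.sum_comm]
        refine Finset.sum_congr rfl fun j _ => ?_
        rw [← Finset.sum_mul]
        rfl

end Transfer

section Diff
variable {p q : ℕ} {a : Fin p → ℝ} {b : Fin q → ℝ} {X0 : Matrix (Fin p) (Fin q) ℝ}
variable (ha : ∀ i, 0 < a i) (hb : ∀ j, 0 < b j)
variable (h0nn : ∀ i j, 0 ≤ X0 i j) (h0r : ∀ i, 0 < rowSum X0 i) (h0c : ∀ j, 0 < colSum X0 j)
include ha hb h0nn h0r h0c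

lemma relEnt_diff_const {Y Z : Matrix (Fin p) (Fin q) ℝ}
    (hYnn : ∀ i j, 0 ≤ Y i j) (hZnn : ∀ i j, 0 ≤ Z i j)
    (hYs : suppSubset Y X0) (hZs : suppSubset Z X0)
    (hrow : ∀ i, rowSum Y i = rowSum Z i) (hcol : ∀ j, colSum Y j = colSum Z j) :
    ∀ n, relEnt Y (ipfp a b X0 n) - relEnt Z (ipfp a b X0 n) = relEnt Y X0 - relEnt Z X0 := by
  intro n
  induction n with
  | zero => rfl
  | succ n ih =>
    obtain ⟨hnn, hsupp⟩ := ipfp_inv ha hb h0nn h0r h0c n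
    have hRpos : ∀ i, 0 < Rrat a (ipfp a b X0 n) i :=
      fun i => div_pos (ipfp_rowSum_pos ha hb h0nn h0r h0c n i) (ha i)
    have hCpos : ∀ j, 0 < Crat b (ipfp a b X0 n) j :=
      fun j => div_pos (ipfp_colSum_pos ha hb h0nn h0r h0c n j) (hb j)
    have hYsn : suppSubset Y (ipfp a b X0 n) := fun i j h => (hsupp i j).2 (hYs i j h)
    have hZsn : suppSubset Z (ipfp a b X0 n) := fun i j h => (hsupp i j).2 (hZs i j h)
    have step : ipfp a b X0 (n+1)
        = if Even n then TR a (ipfp a b X0 n) else IPFP.TC b (ipfp a b X0 n) := rfl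
    by_cases hev : Even n
    · rw [step, if_pos hev, relEnt_TR a hYnn hnn hYsn hRpos,
        relEnt_TR a hZnn hnn hZsn hRpos]
      have : ∑ i, rowSum Y i * Real.log (Rrat a (ipfp a b X0 n) i)
          = ∑ i, rowSum Z i * Real.log (Rrat a (ipfp a b X0 n) i) :=
        Finset.sum_congr rfl fun i _ => by rw [hrow i]
      rw [this] at *
      linarith [ih]
    · rw [step, if_neg hev, relEnt_TC b hYnn hnn hYsn hCpos,
        relEnt_TC b hZnn hnn hZsn hCpos]
      have : ∑ j, colSum Y j * Real.log (Crat b (ipfp a b X0 n) j)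
          = ∑ j, colSum Z j * Real.log (Crat b (ipfp a b X0 n) j) :=
        Finset.sum_congr rfl fun j _ => by rw [hcol j]
      rw [this] at *
      linarith [ih]

end Diff

section Gibbs
variable {p q : ℕ}

lemma relEnt_nonneg {Y X : Matrix (Fin p) (Fin q) ℝ}
    (hYnn : ∀ i j, 0 ≤ Y i j) (hXnn : ∀ i j, 0 ≤ X i j) (hYX : suppSubset Y X)
    (htotX : ∑ i, ∑ j, X i j = 1) (htotY : ∑ i, ∑ j, Y i j = 1) :
    0 ≤ relEnt Y X := by
  have cell : ∀ i j, Y i j - X i j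
      ≤ (if 0 < X i j then Y i j * Real.log (Y i j / X i j) else 0) := by
    intro i j
    by_cases h : 0 < X i j
    · rw [if_pos h]
      by_cases hy : Y i j = 0
      · rw [hy]; simp; linarith
      · have hY : 0 < Y i j := lt_of_le_of_ne (hYnn i j) (Ne.symm hy)
        have h1 : Real.log (X i j / Y i j) ≤ X i j / Y i j - 1 :=
          Real.log_le_sub_one_of_pos (div_pos h hY)
        have h2 : Real.log (Y i j / X i j) = - Real.log (X i j / Y i j) := by
          rw [← Real.log_inv, inv_div]
        have h3 : 1 - X i j / Y i j ≤ Real.log (Y i j / X i j) := by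
          rw [h2]; linarith
        have h4 := mul_le_mul_of_nonneg_left h3 hY.le
        have h5 : Y i j * (1 - X i j / Y i j) = Y i j - X i j := by
          field_simp
        linarith
    · have hX0 : X i j = 0 := le_antisymm (not_lt.mp h) (hXnn i j)
      have hY0 : Y i j = 0 := by
        by_contra hy
        exact h (hYX i j (lt_of_le_of_ne (hYnn i j) (Ne.symm hy)))
      rw [if_neg h, hY0, hX0]; simp
  calc (0:ℝ) = (∑ i, ∑ j, Y i j) - (∑ i, ∑ j, X i j) := by rw [htotY, htotX]; ring
    _ = ∑ i, ∑ j, (Y i j - X i j) := by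
        rw [← Finset.sum_sub_distrib]
        exact Finset.sum_congr rfl fun i _ => (Finset.sum_sub_distrib _ _).symm
    _ ≤ relEnt Y X :=
        Finset.sum_le_sum fun i _ => Finset.sum_le_sum fun j _ => cell i j

end Gibbs

section Convex

lemma mul_log_div_expand {x y : ℝ} (hy : 0 ≤ y) (hx : 0 < x) :
    y * Real.log (y / x) = y * Real.log y - y * Real.log x := by
  rcases eq_or_lt_of_le hy with h | h
  · simp [← h]
  · rw [Real.log_div h.ne' hx.ne']; ring

lemma cell_strict {x y z : ℝ} (hx : 0 < x) (hy : 0 ≤ y) (hz : 0 ≤ z) (hne : y ≠ z) :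
    ((y + z) / 2) * Real.log (((y + z) / 2) / x)
      < (y * Real.log (y / x) + z * Real.log (z / x)) / 2 := by
  have hm : (0:ℝ) ≤ (y + z) / 2 := by linarith
  have key := Real.strictConvexOn_mul_log.2 (Set.mem_Ici.mpr hy) (Set.mem_Ici.mpr hz) hne
    (by norm_num : (0:ℝ) < 1/2) (by norm_num : (0:ℝ) < 1/2) (by norm_num)
  simp only [smul_eq_mul] at key
  have hmid : (1:ℝ)/2 * y + 1/2 * z = (y + z)/2 := by ring
  rw [hmid] at key
  rw [mul_log_div_expand hy hx, mul_log_div_expand hz hx, mul_log_div_expand hm hx]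
  have : ((y + z)/2) * Real.log x = (y * Real.log x + z * Real.log x)/2 := by ring
  linarith [key]

lemma cell_le {x y z : ℝ} (hx : 0 < x) (hy : 0 ≤ y) (hz : 0 ≤ z) :
    ((y + z) / 2) * Real.log (((y + z) / 2) / x)
      ≤ (y * Real.log (y / x) + z * Real.log (z / x)) / 2 := by
  rcases eq_or_ne y z with h | h
  · subst h
    have : (y + y)/2 = y := by ring
    rw [this]
    exact le_of_eq (by ring)
  · exact (cell_strict hx hy hz h).le

variable {p q : ℕ}

lemma relEnt_midpoint_lt {X0 Y Z : Matrix (Fin p) (Fin q) ℝ}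
    (hYnn : ∀ i j, 0 ≤ Y i j) (hZnn : ∀ i j, 0 ≤ Z i j)
    (hYs : suppSubset Y X0) (hZs : suppSubset Z X0) (hne : Y ≠ Z) :
    relEnt (fun i j => (Y i j + Z i j) / 2) X0 < (relEnt Y X0 + relEnt Z X0) / 2 := by
  have hdiff : ∃ i j, Y i j ≠ Z i j := by
    by_contra h
    push_neg at h
    exact hne (funext fun i => funext fun j => h i j)
  obtain ⟨i0, j0, hij⟩ := hdiff
  have hX0pos : 0 < X0 i0 j0 := by
    rcases lt_or_ge 0 (Y i0 j0) with h | h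
    · exact hYs i0 j0 h
    · have hY0 : Y i0 j0 = 0 := le_antisymm h (hYnn i0 j0)
      have : 0 < Z i0 j0 := by
        rcases lt_or_ge 0 (Z i0 j0) with h' | h'
        · exact h'
        · exact absurd (le_antisymm h' (hZnn i0 j0) ▸ hY0) hij
      exact hZs i0 j0 this
  unfold relEnt
  rw [← Finset.sum_product', ← Finset.sum_product', ← Finset.sum_product']
  rw [← Finset.sum_add_distrib, Finset.sum_div]
  refine Finset.sum_lt_sum (fun x _ => ?_) ⟨(i0, j0), Finset.mem_univ _, ?_⟩
  · obtain ⟨i, j⟩ := x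
    by_cases h : 0 < X0 i j
    · simp only [if_pos h]
      exact cell_le h (hYnn i j) (hZnn i j)
    · simp only [if_neg h]
      norm_num
  · simp only [if_pos hX0pos]
    exact cell_strict hX0pos (hYnn i0 j0) (hZnn i0 j0) hij

end Convex



section Cont
variable {p q : ℕ}

lemma relEnt_tendsto_zero {X0 : Matrix (Fin p) (Fin q) ℝ}
    (Xs : ℕ → Matrix (Fin p) (Fin q) ℝ) (W : Matrix (Fin p) (Fin q) ℝ)
    (hconv : ∀ i j, Tendsto (fun n => Xs n i j) atTop (𝓝 (W i j)))
    (hsupp : ∀ n i j, (0 < Xs n i j ↔ 0 < X0 i j)) :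
    Tendsto (fun n => relEnt W (Xs n)) atTop (𝓝 0) := by
  have hrw : ∀ n, relEnt W (Xs n)
      = ∑ i, ∑ j, (if 0 < X0 i j then W i j * Real.log (W i j / Xs n i j) else 0) := by
    intro n
    exact Finset.sum_congr rfl fun i _ => Finset.sum_congr rfl fun j _ => by
      by_cases h : 0 < X0 i j
      · rw [if_pos ((hsupp n i j).2 h), if_pos h]
      · rw [if_neg (fun hc => h ((hsupp n i j).1 hc)), if_neg h]
  rw [show (fun n => relEnt W (Xs n))
      = fun n => ∑ i, ∑ j, (if 0 < X0 i j then W i j * Real.log (W i j / Xs n i j) else 0)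
    from funext hrw]
  have key : Tendsto
      (fun n => ∑ i, ∑ j, (if 0 < X0 i j then W i j * Real.log (W i j / Xs n i j) else 0))
      atTop (𝓝 (∑ _i : Fin p, ∑ _j : Fin q, (0:ℝ))) := by
    refine tendsto_finset_sum _ fun i _ => tendsto_finset_sum _ fun j _ => ?_
    by_cases h : 0 < X0 i j
    · simp only [h, if_true]
      by_cases hw : W i j = 0
      · simp only [hw, zero_mul]
        exact tendsto_const_nhds
      · have hdiv : Tendsto (fun n => W i j / Xs n i j) atTop (𝓝 (W i j / W i j)) :=
          Tendsto.div tendsto_const_nhds (hconv i j) hw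
        rw [div_self hw] at hdiv
        have hlog : Tendsto (fun n => Real.log (W i j / Xs n i j)) atTop (𝓝 (Real.log 1)) :=
          ((Real.continuousAt_log one_ne_zero).tendsto).comp hdiv
        rw [Real.log_one] at hlog
        have := hlog.const_mul (W i j)
        rw [mul_zero] at this
        exact this
    · simp only [h, if_false]
      exact tendsto_const_nhds
  simpa using key
end Cont

section Master
variable {p q : ℕ}

lemma master (X0 : Matrix (Fin p) (Fin q) ℝ)
    (Xs : ℕ → Matrix (Fin p) (Fin q) ℝ) (u : Fin p → ℝ) (v : Fin q → ℝ)
    (h1 : ∀ n i j, 0 ≤ Xs n i j)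
    (h2 : ∀ n i j, 0 < Xs n i j ↔ 0 < X0 i j)
    (h3 : ∀ n, ∑ i, ∑ j, Xs n i j = 1)
    (h4 : ∀ i, Tendsto (fun n => rowSum (Xs n) i) atTop (𝓝 (u i)))
    (h5 : ∀ j, Tendsto (fun n => colSum (Xs n) j) atTop (𝓝 (v j)))
    (h6 : ∀ Y Z : Matrix (Fin p) (Fin q) ℝ, (∀ i j, 0 ≤ Y i j) → (∀ i j, 0 ≤ Z i j) →
      suppSubset Y X0 → suppSubset Z X0 → (∀ i, rowSum Y i = rowSum Z i) →
      (∀ j, colSum Y j = colSum Z j) →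
      ∀ n, relEnt Y (Xs n) - relEnt Z (Xs n) = relEnt Y X0 - relEnt Z X0)
    (h7 : ∀ i, 0 < u i) (h8 : ∀ j, 0 < v j) :
    ∃ L, Tendsto Xs atTop (𝓝 L) ∧ IPFP.memGammaSub u v X0 L ∧
      (∀ Y, IPFP.memGammaSub u v X0 Y → Y ≠ L → relEnt L X0 < relEnt Y X0) := by
  -- total mass of u
  have hsu : ∑ i, u i = 1 := by
    have ht : Tendsto (fun n => ∑ i, rowSum (Xs n) i) atTop (𝓝 (∑ i, u i)) :=
      tendsto_finset_sum _ fun i _ => h4 i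
    have heq : (fun n => ∑ i, rowSum (Xs n) i) = fun _ => (1:ℝ) :=
      funext fun n => h3 n
    rw [heq] at ht
    exact tendsto_nhds_unique ht tendsto_const_nhds
  -- the compact set
  set K : Set (Matrix (Fin p) (Fin q) ℝ) := {M | ∀ i j, M i j ∈ Set.Icc (0:ℝ) 1} with hKdef
  have hKcomp : IsCompact K := by
    have : K = Set.univ.pi (fun _ : Fin p => Set.univ.pi fun _ : Fin q => Set.Icc (0:ℝ) 1) := by
      ext M
      constructor
      · intro h i _ j _
        exact h i j
      · intro h i j
        exact h i (Set.mem_univ i) j (Set.mem_univ j)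
    rw [this]
    exact isCompact_univ_pi fun _ => isCompact_univ_pi fun _ => isCompact_Icc
  have hK : ∀ n, Xs n ∈ K := by
    intro n i j
    refine ⟨h1 n i j, ?_⟩
    calc Xs n i j ≤ ∑ j', Xs n i j' :=
          Finset.single_le_sum (fun j' _ => h1 n i j') (Finset.mem_univ j)
      _ ≤ ∑ i', ∑ j', Xs n i' j' :=
          Finset.single_le_sum (f := fun i' => ∑ j', Xs n i' j')
            (fun i' _ => Finset.sum_nonneg fun j' _ => h1 n i' j') (Finset.mem_univ i)
      _ = 1 := h3 n
  -- every accumulation point lies in Γ(u,v,X0)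
  have accProps : ∀ (ψ : ℕ → ℕ), Tendsto ψ atTop atTop →
      ∀ W, Tendsto (fun t => Xs (ψ t)) atTop (𝓝 W) → IPFP.memGammaSub u v X0 W := by
    intro ψ hψ W hW
    have hWe : ∀ i j, Tendsto (fun t => Xs (ψ t) i j) atTop (𝓝 (W i j)) := by
      intro i j
      exact tendsto_pi_nhds.mp (tendsto_pi_nhds.mp hW i) j
    have hWnn : ∀ i j, 0 ≤ W i j :=
      fun i j => ge_of_tendsto' (hWe i j) fun t => h1 (ψ t) i j
    have hWrow : ∀ i, rowSum W i = u i := by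
      intro i
      have t1 : Tendsto (fun t => rowSum (Xs (ψ t)) i) atTop (𝓝 (rowSum W i)) :=
        tendsto_finset_sum _ fun j _ => hWe i j
      have t2 : Tendsto (fun t => rowSum (Xs (ψ t)) i) atTop (𝓝 (u i)) := (h4 i).comp hψ
      exact tendsto_nhds_unique t1 t2
    have hWcol : ∀ j, colSum W j = v j := by
      intro j
      have t1 : Tendsto (fun t => colSum (Xs (ψ t)) j) atTop (𝓝 (colSum W j)) :=
        tendsto_finset_sum _ fun i _ => hWe i j
      have t2 : Tendsto (fun t => colSum (Xs (ψ t)) j) atTop (𝓝 (v j)) := (h5 j).comp hψ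
      exact tendsto_nhds_unique t1 t2
    have hWsupp : suppSubset W X0 := by
      intro i j hpos
      by_contra h
      have hz : ∀ t, Xs (ψ t) i j = 0 := fun t =>
        le_antisymm (not_lt.mp fun hc => h ((h2 (ψ t) i j).1 hc)) (h1 (ψ t) i j)
      have : W i j = 0 := by
        have : Tendsto (fun t => Xs (ψ t) i j) atTop (𝓝 0) := by
          rw [show (fun t => Xs (ψ t) i j) = fun _ => (0:ℝ) from funext hz]
          exact tendsto_const_nhds
        exact tendsto_nhds_unique (hWe i j) this
      rw [this] at hpos
      exact lt_irrefl 0 hpos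
    exact ⟨⟨⟨hWnn, fun i => (hWrow i) ▸ h7 i, fun j => (hWcol j) ▸ h8 j⟩, hWrow, hWcol⟩, hWsupp⟩
  -- total mass of members of the class
  have classTotal : ∀ Z, IPFP.memGammaSub u v X0 Z → ∑ i, ∑ j, Z i j = 1 := by
    intro Z hZ
    calc ∑ i, ∑ j, Z i j = ∑ i, rowSum Z i := rfl
      _ = ∑ i, u i := Finset.sum_congr rfl fun i _ => hZ.1.2.1 i
      _ = 1 := hsu
  -- minimality at any accumulation point
  have minProp : ∀ (ψ : ℕ → ℕ), Tendsto ψ atTop atTop →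
      ∀ W, Tendsto (fun t => Xs (ψ t)) atTop (𝓝 W) →
      ∀ Z, IPFP.memGammaSub u v X0 Z → Z ≠ W → relEnt W X0 < relEnt Z X0 := by
    intro ψ hψ W hW Z hZ hne
    have hWmem := accProps ψ hψ W hW
    by_contra hle
    push_neg at hle
    set M : Matrix (Fin p) (Fin q) ℝ := fun i j => (Z i j + W i j) / 2 with hMdef
    have hMnn : ∀ i j, 0 ≤ M i j := fun i j => by
      have := hZ.1.1.1 i j
      have := hWmem.1.1.1 i j
      simp only [hMdef]
      linarith
    have hMrow : ∀ i, rowSum M i = u i := by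
      intro i
      have : rowSum M i = (rowSum Z i + rowSum W i) / 2 := by
        simp only [rowSum, hMdef, ← Finset.sum_div, Finset.sum_add_distrib]
      rw [this, hZ.1.2.1 i, hWmem.1.2.1 i]
      ring
    have hMcol : ∀ j, colSum M j = v j := by
      intro j
      have : colSum M j = (colSum Z j + colSum W j) / 2 := by
        simp only [colSum, hMdef, ← Finset.sum_div, Finset.sum_add_distrib]
      rw [this, hZ.1.2.2 j, hWmem.1.2.2 j]
      ring
    have hMsupp : suppSubset M X0 := by
      intro i j hpos
      by_contra h
      have hz : Z i j = 0 :=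
        le_antisymm (not_lt.mp fun hc => h (hZ.2 i j hc)) (hZ.1.1.1 i j)
      have hw : W i j = 0 :=
        le_antisymm (not_lt.mp fun hc => h (hWmem.2 i j hc)) (hWmem.1.1.1 i j)
      simp only [hMdef, hz, hw] at hpos
      norm_num at hpos
    have hMtot : ∑ i, ∑ j, M i j = 1 := by
      calc ∑ i, ∑ j, M i j = ∑ i, rowSum M i := rfl
        _ = ∑ i, u i := Finset.sum_congr rfl fun i _ => hMrow i
        _ = 1 := hsu
    have hMlt : relEnt M X0 < (relEnt Z X0 + relEnt W X0) / 2 :=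
      relEnt_midpoint_lt hZ.1.1.1 hWmem.1.1.1 hZ.2 hWmem.2 hne
    have hdiff : ∀ n, relEnt M (Xs n) - relEnt W (Xs n) = relEnt M X0 - relEnt W X0 :=
      h6 M W hMnn hWmem.1.1.1 hMsupp hWmem.2
        (fun i => by rw [hMrow i, hWmem.1.2.1 i])
        (fun j => by rw [hMcol j, hWmem.1.2.2 j])
    have hMge : ∀ n, 0 ≤ relEnt M (Xs n) := fun n =>
      relEnt_nonneg hMnn (h1 n)
        (fun i j hm => (h2 n i j).2 (hMsupp i j hm)) (h3 n) hMtot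
    have hWtend : Tendsto (fun t => relEnt W (Xs (ψ t))) atTop (𝓝 0) :=
      relEnt_tendsto_zero (X0 := X0) (fun t => Xs (ψ t)) W
        (fun i j => tendsto_pi_nhds.mp (tendsto_pi_nhds.mp hW i) j)
        (fun t => h2 (ψ t))
    have key : 0 ≤ relEnt M X0 - relEnt W X0 := by
      have hb : ∀ t, -(relEnt W (Xs (ψ t))) ≤ relEnt M X0 - relEnt W X0 := by
        intro t
        have := hdiff (ψ t)
        linarith [hMge (ψ t)]
      have hneg : Tendsto (fun t => -(relEnt W (Xs (ψ t)))) atTop (𝓝 0) := by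
        simpa using hWtend.neg
      exact le_of_tendsto hneg (Eventually.of_forall hb)
    linarith
  -- extract an accumulation point
  haveI : FirstCountableTopology (Matrix (Fin p) (Fin q) ℝ) :=
    inferInstanceAs (FirstCountableTopology (Fin p → Fin q → ℝ))
  obtain ⟨L, _, φ, hφmono, hφconv⟩ := hKcomp.tendsto_subseq hK
  have hφconv' : Tendsto (fun t => Xs (φ t)) atTop (𝓝 L) := hφconv
  have hLmem : IPFP.memGammaSub u v X0 L := accProps φ hφmono.tendsto_atTop L hφconv'
  refine ⟨L, ?_, hLmem, fun Z hZ hne => minProp φ hφmono.tendsto_atTop L hφconv' Z hZ hne⟩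
  -- convergence of the whole sequence
  apply tendsto_of_subseq_tendsto
  intro ns hns
  obtain ⟨W, _, ms, hmsmono, hconv2⟩ := hKcomp.tendsto_subseq (fun n => hK (ns n))
  have hconv2' : Tendsto (fun t => Xs (ns (ms t))) atTop (𝓝 W) := hconv2
  have hψ : Tendsto (fun t => ns (ms t)) atTop atTop := hns.comp hmsmono.tendsto_atTop
  have hWmem := accProps _ hψ W hconv2'
  have hWL : W = L := by
    by_contra hne
    have h1' := minProp _ hψ W hconv2' L hLmem (fun h => hne h.symm)
    have h2' := minProp φ hφmono.tendsto_atTop L hφconv' W hWmem hne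
    linarith
  exact ⟨ms, hWL ▸ hconv2'⟩

end Master


lemma eq_mul_div_self {c r : ℝ} (hc : c ≠ 0) : r = c * (r / c) := by
  rw [mul_comm]
  exact (div_mul_cancel₀ r hc).symm

/-- With `r`, the partitions `{I_k}`, `{J_k}` and the limits
`λ_k = b(J_k)/a(I_k)` as in the divergence theorem, and the modified marginals
`a'_i = λ_k·a_i` (`i ∈ I_k`), `b'_j = λ_k⁻¹·b_j` (`j ∈ J_k`): the sequence `(X_{2n})`
converges to the unique minimizer of `D(·‖X_0)` over `Γ(a',b,X_0)`, and `(X_{2n+1})`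
converges to the unique minimizer of `D(·‖X_0)` over `Γ(a,b',X_0)`. -/
theorem ipfp_divergence_limits
    (p q : ℕ) (hp : 2 ≤ p) (hq : 2 ≤ q)
    (a : Fin p → ℝ) (b : Fin q → ℝ)
    (ha : ∀ i, 0 < a i) (hb : ∀ j, 0 < b j)
    (hsa : ∑ i, a i = 1) (hsb : ∑ j, b j = 1)
    (X0 : Matrix (Fin p) (Fin q) ℝ) (hX0 : memGamma1 X0)
    (r : ℕ) (hr : 0 < r) (hrpq : r ≤ min p q)
    (I : Fin r → Finset (Fin p)) (J : Fin r → Finset (Fin q))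
    (hI : ∀ i : Fin p, ∃! k, i ∈ I k) (hIne : ∀ k, (I k).Nonempty)
    (hJ : ∀ j : Fin q, ∃! k, j ∈ J k) (hJne : ∀ k, (J k).Nonempty)
    (lam : Fin r → ℝ)
    (hlam : ∀ k, lam k = (∑ j ∈ J k, b j) / ∑ i ∈ I k, a i)
    (hR : ∀ k, ∀ i ∈ I k,
      Tendsto (fun n => Rrat a (ipfp a b X0 (2 * n)) i) atTop (nhds (lam k)))
    (hC : ∀ k, ∀ j ∈ J k,
      Tendsto (fun n => Crat b (ipfp a b X0 (2 * n + 1)) j) atTop (nhds ((lam k)⁻¹)))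
    (a' : Fin p → ℝ) (ha' : ∀ k, ∀ i ∈ I k, a' i = lam k * a i)
    (b' : Fin q → ℝ) (hb' : ∀ k, ∀ j ∈ J k, b' j = (lam k)⁻¹ * b j) :
    (∃ Leven : Matrix (Fin p) (Fin q) ℝ,
      Tendsto (fun n => ipfp a b X0 (2 * n)) atTop (nhds Leven) ∧
      memGammaSub a' b X0 Leven ∧
      (∀ Y, memGammaSub a' b X0 Y → Y ≠ Leven → relEnt Leven X0 < relEnt Y X0)) ∧
    (∃ Lodd : Matrix (Fin p) (Fin q) ℝ,
      Tendsto (fun n => ipfp a b X0 (2 * n + 1)) atTop (nhds Lodd) ∧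
      memGammaSub a b' X0 Lodd ∧
      (∀ Y, memGammaSub a b' X0 Y → Y ≠ Lodd → relEnt Lodd X0 < relEnt Y X0)) := by

  obtain ⟨⟨h0nn, h0r, h0c⟩, h0tot⟩ := hX0
  have hlampos : ∀ k, 0 < lam k := by
    intro k
    rw [hlam k]
    exact div_pos (Finset.sum_pos (fun j _ => hb j) (hJne k))
      (Finset.sum_pos (fun i _ => ha i) (hIne k))
  have ha'pos : ∀ i, 0 < a' i := by
    intro i
    obtain ⟨k, hik, -⟩ := hI i
    rw [ha' k i hik]
    exact mul_pos (hlampos k) (ha i)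
  have hb'pos : ∀ j, 0 < b' j := by
    intro j
    obtain ⟨k, hjk, -⟩ := hJ j
    rw [hb' k j hjk]
    exact mul_pos (inv_pos.mpr (hlampos k)) (hb j)
  have hinv := ipfp_inv (a := a) (b := b) (X0 := X0) ha hb h0nn h0r h0c
  have htot := ipfp_total ha hb h0nn h0r h0c h0tot hsa hsb
  constructor
  · -- even subsequence
    refine master X0 (fun n => ipfp a b X0 (2 * n)) a' b
      (fun n => (hinv (2 * n)).1) (fun n => (hinv (2 * n)).2) (fun n => htot (2 * n))
      ?_ ?_ (fun Y Z h1 h2 h3 h4 h5 h6 n =>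
        relEnt_diff_const ha hb h0nn h0r h0c h1 h2 h3 h4 h5 h6 (2 * n)) ha'pos hb
    · intro i
      obtain ⟨k, hik, -⟩ := hI i
      have hrw : ∀ n, rowSum (ipfp a b X0 (2 * n)) i
          = a i * Rrat a (ipfp a b X0 (2 * n)) i := by
        intro n
        exact eq_mul_div_self (ha i).ne'
      have ht : Tendsto (fun n => a i * Rrat a (ipfp a b X0 (2 * n)) i) atTop
          (𝓝 (a i * lam k)) := (hR k i hik).const_mul (a i)
      rw [show (fun n => rowSum (ipfp a b X0 (2 * n)) i)
          = fun n => a i * Rrat a (ipfp a b X0 (2 * n)) i from funext hrw]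
      rw [ha' k i hik, mul_comm]
      exact ht
    · intro j
      have hev : (fun _ : ℕ => b j) =ᶠ[atTop] fun n => colSum (ipfp a b X0 (2 * n)) j := by
        refine eventually_atTop.2 ⟨1, fun n hn => ?_⟩
        obtain ⟨m, rfl⟩ : ∃ m, n = m + 1 := ⟨n - 1, by omega⟩
        show b j = colSum (ipfp a b X0 (2 * (m + 1))) j
        rw [show 2 * (m + 1) = 2 * m + 2 by ring]
        exact (colSum_ipfp_even_succ ha hb h0nn h0r h0c m j).symm
      exact tendsto_const_nhds.congr' hev
  · -- odd subsequence
    refine master X0 (fun n => ipfp a b X0 (2 * n + 1)) a b'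
      (fun n => (hinv (2 * n + 1)).1) (fun n => (hinv (2 * n + 1)).2)
      (fun n => htot (2 * n + 1))
      ?_ ?_ (fun Y Z h1 h2 h3 h4 h5 h6 n =>
        relEnt_diff_const ha hb h0nn h0r h0c h1 h2 h3 h4 h5 h6 (2 * n + 1)) ha hb'pos
    · intro i
      rw [show (fun n => rowSum (ipfp a b X0 (2 * n + 1)) i) = fun _ => a i from
        funext fun n => rowSum_ipfp_odd ha hb h0nn h0r h0c n i]
      exact tendsto_const_nhds
    · intro j
      obtain ⟨k, hjk, -⟩ := hJ j
      have hrw : ∀ n, colSum (ipfp a b X0 (2 * n + 1)) j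
          = b j * Crat b (ipfp a b X0 (2 * n + 1)) j := by
        intro n
        exact eq_mul_div_self (hb j).ne'
      have ht : Tendsto (fun n => b j * Crat b (ipfp a b X0 (2 * n + 1)) j) atTop
          (𝓝 (b j * (lam k)⁻¹)) := (hC k j hjk).const_mul (b j)
      rw [show (fun n => colSum (ipfp a b X0 (2 * n + 1)) j)
          = fun n => b j * Crat b (ipfp a b X0 (2 * n + 1)) j from funext hrw]
      rw [hb' k j hjk, mul_comm]
      exact ht
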